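/- Let λ, m, r, u, v, k be positive real numbers with kλr < muv (i.e., R₀ < 1), and let τ ≥ 0. Then for every real number w, the complex number y = wi is not a root of the equation (u + y)(v + y) − (kλr/m)e^{−τy} = 0; that is, the characteristic factor at the infection-free equilibrium has no pure imaginary roots. -/

import Mathlib

open Complex

/-- If `R₀ < 1` and `τ ≥ 0`, the characteristic factor
`(u+y)(v+y) − (kλr/m)e^{−τy}` at the infection-free equilibrium has
no pure imaginary roots `y = wi`. -/
theorem no_pure_imaginary_roots_E0
    (lam m r u v k τ : ℝ)
    (hlam : 0 < lam) (hm : 0 < m) (hr : 0 < r) (hu : 0 < u)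
    (hv : 0 < v) (hk : 0 < k)
    (hR0 : k * lam * r < m * u * v) (hτ : 0 ≤ τ) :
    ∀ w : ℝ,
      ((u : ℂ) + w * Complex.I) * ((v : ℂ) + w * Complex.I)
        - ((k * lam * r / m : ℝ) : ℂ) * Complex.exp (-(τ : ℂ) * (w * Complex.I)) ≠ 0 := by
  intro w heq
  rw [sub_eq_zero] at heq
  have hc : (0:ℝ) ≤ k * lam * r / m := by positivity
  have hexp : ‖Complex.exp (-(τ : ℂ) * (w * Complex.I))‖ = 1 := by
    rw [Complex.norm_exp]
    simp
  have habs : ‖(u : ℂ) + w * Complex.I‖ * ‖(v : ℂ) + w * Complex.I‖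
      = k * lam * r / m := by
    rw [← norm_mul, heq, norm_mul, hexp, mul_one, Complex.norm_real, Real.norm_of_nonneg hc]
  have h1 : u ≤ ‖(u : ℂ) + w * Complex.I‖ := by
    have := Complex.abs_re_le_norm ((u : ℂ) + w * Complex.I)
    simpa using le_trans (le_abs_self _) this
  have h2 : v ≤ ‖(v : ℂ) + w * Complex.I‖ := by
    have := Complex.abs_re_le_norm ((v : ℂ) + w * Complex.I)
    simpa using le_trans (le_abs_self _) this
  have hlt : k * lam * r / m < u * v := by
    rw [div_lt_iff₀ hm]
    nlinarith
  have : u * v ≤ k * lam * r / m := by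
    rw [← habs]
    exact mul_le_mul h1 h2 hv.le (by positivity)
  linarith
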